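/- For every integer m ≥ 1 one has the double inequality ((2+m)/m)·((4+3m)/(2+2m))^{m/(2+m)} − (2+m)/m ≥ 1/2 ≥ (m/(2+m))·((2+3m)/(2+2m))^{(2+m)/m} − m/(2+m). -/

import Mathlib

open Real

lemma key_amgm (p z : ℝ) (hp0 : 0 ≤ p) (hp1 : p ≤ 1) (hz : 0 < z) :
    z / ((1 - p) * z + p) ≤ z ^ p := by
  have h1 : z ^ (1 - p) ≤ (1 - p) * z + p := by
    have := Real.geom_mean_le_arith_mean2_weighted (by linarith : (0:ℝ) ≤ 1 - p) hp0
      hz.le zero_le_one (by ring)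
    simpa using this
  have hden : 0 < (1 - p) * z + p :=
    lt_of_lt_of_le (Real.rpow_pos_of_pos hz _) h1
  rw [div_le_iff₀ hden]
  have hz' : z = z ^ p * z ^ (1 - p) := by
    rw [← Real.rpow_add hz]; simp
  calc z = z ^ p * z ^ (1 - p) := hz'
    _ ≤ z ^ p * ((1 - p) * z + p) := by
        exact mul_le_mul_of_nonneg_left h1 (Real.rpow_nonneg hz.le _)

/-- For every integer `m ≥ 1`,
`((2+m)/m)((4+3m)/(2+2m))^{m/(2+m)} - (2+m)/m ≥ 1/2 ≥ (m/(2+m))((2+3m)/(2+2m))^{(2+m)/m} - m/(2+m)`. -/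
theorem stmt_16 (m : ℕ) (hm : 1 ≤ m) :
    ((2 + (m : ℝ)) / (m : ℝ)) *
        ((4 + 3 * (m : ℝ)) / (2 + 2 * (m : ℝ))) ^ ((m : ℝ) / (2 + (m : ℝ)))
        - (2 + (m : ℝ)) / (m : ℝ) ≥ 1 / 2 ∧
    (1 : ℝ) / 2 ≥ ((m : ℝ) / (2 + (m : ℝ))) *
        ((2 + 3 * (m : ℝ)) / (2 + 2 * (m : ℝ))) ^ ((2 + (m : ℝ)) / (m : ℝ))
        - (m : ℝ) / (2 + (m : ℝ)) := by
  set M : ℝ := (m : ℝ) with hMdef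
  have hM : (1:ℝ) ≤ M := by rw [hMdef]; exact_mod_cast hm
  have hM0 : 0 < M := by linarith
  set p : ℝ := M / (2 + M) with hp
  have hp0 : 0 < p := by positivity
  have hp1 : p ≤ 1 := by
    rw [hp, div_le_one (by linarith)]; linarith
  -- First inequality
  have hx : 0 < (4 + 3*M) / (2 + 2*M) := by positivity
  have hA : (4 + 3*M) / (4 + 2*M) ≤ ((4 + 3*M) / (2 + 2*M)) ^ p := by
    have h := key_amgm p ((4 + 3*M) / (2 + 2*M)) hp0.le hp1 hx
    have heq : ((4 + 3*M) / (2 + 2*M)) / ((1 - p) * ((4 + 3*M) / (2 + 2*M)) + p)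
        = (4 + 3*M) / (4 + 2*M) := by
      rw [hp]; field_simp; ring_nf; field_simp; ring
    rwa [heq] at h
  constructor
  · have h1 : ((2 + M) / M) * ((4 + 3*M) / (4 + 2*M)) - (2 + M) / M = 1/2 := by
      field_simp; ring
    have h2 : ((2 + M) / M) * ((4 + 3*M) / (4 + 2*M))
        ≤ ((2 + M) / M) * ((4 + 3*M) / (2 + 2*M)) ^ p := by
      apply mul_le_mul_of_nonneg_left hA (by positivity)
    rw [hp] at h2
    linarith
  · -- Second inequality
    set z : ℝ := (3*M + 2) / (2*M) with hz
    have hz0 : 0 < z := by positivity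
    have hB : (2 + 3*M) / (2 + 2*M) ≤ z ^ p := by
      have h := key_amgm p z hp0.le hp1 hz0
      have heq : z / ((1 - p) * z + p) = (2 + 3*M) / (2 + 2*M) := by
        rw [hz, hp]; field_simp; ring_nf; field_simp; ring
      rwa [heq] at h
    have hy0 : (0:ℝ) ≤ (2 + 3*M) / (2 + 2*M) := by positivity
    have hq0 : (0:ℝ) ≤ (2 + M) / M := by positivity
    have hC : ((2 + 3*M) / (2 + 2*M)) ^ ((2 + M) / M) ≤ z := by
      have h := Real.rpow_le_rpow hy0 hB hq0
      rw [← Real.rpow_mul hz0.le] at h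
      have he : p * ((2 + M) / M) = 1 := by
        rw [hp]; field_simp
      rwa [he, Real.rpow_one] at h
    have h1 : (M / (2 + M)) * z - M / (2 + M) = 1/2 := by
      rw [hz]; field_simp; ring
    have h2 : (M / (2 + M)) * ((2 + 3*M) / (2 + 2*M)) ^ ((2 + M) / M)
        ≤ (M / (2 + M)) * z :=
      mul_le_mul_of_nonneg_left hC (by positivity)
    linarith
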